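/- Let (x_n, y_n), n ≥ −k, be a positive well-defined solution of the system x_{n+1} = x_{n−k+1}·y_n/(a·y_{n−k} + b·y_n), y_{n+1} = y_{n−k+1}·x_n/(α·x_{n−k} + β·x_n), with b, β ≥ 0, a ≥ 1, α ≥ 1, a·y_{−k} ≥ y_0 and α·x_{−k} ≥ x_0. Then x_{n+1} ≤ x_{n−k+1} and y_{n+1} ≤ y_{n−k+1} for all n ≥ 0, and hence the solution is bounded: x_n ≤ max{x_{−i} : 0 ≤ i ≤ k−1} and y_n ≤ max{y_{−i} : 0 ≤ i ≤ k−1} for all n ≥ 0. -/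

import Mathlib

theorem stmt_8 (k : ℕ) (hk : 1 ≤ k) (a b α β : ℝ)
    (ha : 1 ≤ a) (hα : 1 ≤ α) (hb : 0 ≤ b) (hβ : 0 ≤ β)
    (x y : ℤ → ℝ)
    (hxpos : ∀ n : ℤ, -(k : ℤ) ≤ n → 0 < x n)
    (hypos : ∀ n : ℤ, -(k : ℤ) ≤ n → 0 < y n)
    (hinitx : α * x (-(k : ℤ)) ≥ x 0)
    (hinity : a * y (-(k : ℤ)) ≥ y 0)
    (hrecx : ∀ n : ℤ, 0 ≤ n →
      x (n + 1) = x (n - k + 1) * y n / (a * y (n - k) + b * y n))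
    (hrecy : ∀ n : ℤ, 0 ≤ n →
      y (n + 1) = y (n - k + 1) * x n / (α * x (n - k) + β * x n)) :
    (∀ n : ℤ, 0 ≤ n → x (n + 1) ≤ x (n - k + 1) ∧ y (n + 1) ≤ y (n - k + 1)) ∧
    (∀ n : ℤ, 0 ≤ n →
      x n ≤ (Finset.range k).sup' (Finset.nonempty_range_iff.mpr (by omega))
        (fun i => x (-(i : ℤ))) ∧
      y n ≤ (Finset.range k).sup' (Finset.nonempty_range_iff.mpr (by omega))
        (fun i => y (-(i : ℤ)))) := by
  have hk' : (1:ℤ) ≤ (k:ℤ) := by exact_mod_cast hk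
  -- key invariant
  have key : ∀ n : ℤ, 0 ≤ n → x n ≤ α * x (n - k) ∧ y n ≤ a * y (n - k) := by
    refine Int.le_induction ?_ ?_
    · constructor
      · simpa [zero_sub] using hinitx
      · simpa [zero_sub] using hinity
    · intro n hn ih
      have hxk1 : 0 < x (n - k + 1) := hxpos _ (by omega)
      have hyk1 : 0 < y (n - k + 1) := hypos _ (by omega)
      have hxk : 0 < x (n - k) := hxpos _ (by omega)
      have hyk : 0 < y (n - k) := hypos _ (by omega)
      have hxn : 0 < x n := hxpos _ (by omega)
      have hyn : 0 < y n := hypos _ (by omega)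
      have hDx : 0 < a * y (n - k) + b * y n :=
        add_pos_of_pos_of_nonneg (mul_pos (lt_of_lt_of_le one_pos ha) hyk)
          (mul_nonneg hb hyn.le)
      have hDy : 0 < α * x (n - k) + β * x n :=
        add_pos_of_pos_of_nonneg (mul_pos (lt_of_lt_of_le one_pos hα) hxk)
          (mul_nonneg hβ hxn.le)
      have hx1 : x (n + 1) ≤ x (n - k + 1) := by
        rw [hrecx n hn, div_le_iff₀ hDx]
        have h1 : y n ≤ a * y (n - k) + b * y n := by
          have := mul_nonneg hb hyn.le
          linarith [ih.2]
        exact mul_le_mul_of_nonneg_left h1 hxk1.le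
      have hy1 : y (n + 1) ≤ y (n - k + 1) := by
        rw [hrecy n hn, div_le_iff₀ hDy]
        have h1 : x n ≤ α * x (n - k) + β * x n := by
          have := mul_nonneg hβ hxn.le
          linarith [ih.1]
        exact mul_le_mul_of_nonneg_left h1 hyk1.le
      have e : n + 1 - (k:ℤ) = n - k + 1 := by ring
      rw [e]
      constructor
      · have := le_mul_of_one_le_left hxk1.le hα
        linarith
      · have := le_mul_of_one_le_left hyk1.le ha
        linarith
  have mono : ∀ n : ℤ, 0 ≤ n → x (n + 1) ≤ x (n - k + 1) ∧ y (n + 1) ≤ y (n - k + 1) := by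
    intro n hn
    obtain ⟨ihx, ihy⟩ := key n hn
    have hxk1 : 0 < x (n - k + 1) := hxpos _ (by omega)
    have hyk1 : 0 < y (n - k + 1) := hypos _ (by omega)
    have hxk : 0 < x (n - k) := hxpos _ (by omega)
    have hyk : 0 < y (n - k) := hypos _ (by omega)
    have hxn : 0 < x n := hxpos _ (by omega)
    have hyn : 0 < y n := hypos _ (by omega)
    have hDx : 0 < a * y (n - k) + b * y n :=
      add_pos_of_pos_of_nonneg (mul_pos (lt_of_lt_of_le one_pos ha) hyk)
        (mul_nonneg hb hyn.le)
    have hDy : 0 < α * x (n - k) + β * x n :=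
      add_pos_of_pos_of_nonneg (mul_pos (lt_of_lt_of_le one_pos hα) hxk)
        (mul_nonneg hβ hxn.le)
    constructor
    · rw [hrecx n hn, div_le_iff₀ hDx]
      have h1 : y n ≤ a * y (n - k) + b * y n := by
        have := mul_nonneg hb hyn.le
        linarith [ihy]
      exact mul_le_mul_of_nonneg_left h1 hxk1.le
    · rw [hrecy n hn, div_le_iff₀ hDy]
      have h1 : x n ≤ α * x (n - k) + β * x n := by
        have := mul_nonneg hβ hxn.le
        linarith [ihx]
      exact mul_le_mul_of_nonneg_left h1 hyk1.le
  refine ⟨mono, ?_⟩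
  have hne : (Finset.range k).Nonempty := Finset.nonempty_range_iff.mpr (by omega)
  have boundN : ∀ m : ℕ,
      x (m:ℤ) ≤ (Finset.range k).sup' hne (fun i => x (-(i : ℤ))) ∧
      y (m:ℤ) ≤ (Finset.range k).sup' hne (fun i => y (-(i : ℤ))) := by
    intro m
    induction m using Nat.strong_induction_on with
    | _ m ih =>
      rcases Nat.eq_zero_or_pos m with h0 | h1
      · subst h0
        have h0mem : 0 ∈ Finset.range k := Finset.mem_range.mpr hk
        constructor
        · simpa only [Nat.cast_zero, neg_zero] using Finset.le_sup' (fun i : ℕ => x (-(i:ℤ))) h0mem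
        · simpa only [Nat.cast_zero, neg_zero] using Finset.le_sup' (fun i : ℕ => y (-(i:ℤ))) h0mem
      · have hm : (0:ℤ) ≤ (m:ℤ) - 1 := by omega
        obtain ⟨hx1, hy1⟩ := mono ((m:ℤ) - 1) hm
        have e1 : ((m:ℤ) - 1) + 1 = (m:ℤ) := by ring
        have e2 : ((m:ℤ) - 1) - k + 1 = (m:ℤ) - k := by ring
        rw [e1, e2] at hx1 hy1
        by_cases hmk : k ≤ m
        · have e3 : (m:ℤ) - k = ((m - k : ℕ) : ℤ) := by omega
          rw [e3] at hx1 hy1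
          obtain ⟨ihx, ihy⟩ := ih (m - k) (by omega)
          exact ⟨hx1.trans ihx, hy1.trans ihy⟩
        · push_neg at hmk
          have e3 : (m:ℤ) - k = -(((k - m : ℕ)) : ℤ) := by omega
          rw [e3] at hx1 hy1
          have hin : k - m ∈ Finset.range k := Finset.mem_range.mpr (by omega)
          exact ⟨hx1.trans (Finset.le_sup' (fun i : ℕ => x (-(i:ℤ))) hin),
            hy1.trans (Finset.le_sup' (fun i : ℕ => y (-(i:ℤ))) hin)⟩
  intro n hn
  have := boundN n.toNat
  rw [Int.toNat_of_nonneg hn] at this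
  exact this
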